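/- arXiv:1606.03802 — 8 statements merged into one kernel-verified Lean document; each statement's English description precedes it below -/
import Mathlib

section
/- (Theorem 1, forward direction.) If the bias term b is negative, then the positively labeled region {x ∈ ℝ^d : Σᵢ₌₁^m yᵢ αᵢ K(xᵢ, x) + b > 0} is a bounded subset of ℝ^d. -/
/-- Theorem 1, forward direction: If the bias term b is negative, then
the positively labeled region {x : Σᵢ yᵢ αᵢ K(xᵢ, x) + b > 0} is bounded. -/
theorem negative_bias_bounded_positive_region (d m : ℕ) (hm : 1 ≤ m) (γ : ℝ) (hγ : 0 < γ)
    (xs : Fin m → EuclideanSpace ℝ (Fin d)) (y α : Fin m → ℝ)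
    (hy : ∀ i, y i = -1 ∨ y i = 1) (hα : ∀ i, 0 ≤ α i)
    (b : ℝ) (hb : b < 0) :
    Bornology.IsBounded {x : EuclideanSpace ℝ (Fin d) |
      0 < (∑ i, y i * α i * Real.exp (-γ * ‖xs i - x‖ ^ 2)) + b} := by
  obtain ⟨M, hM⟩ : ∃ M : ℝ, ∀ i, ‖xs i‖ ≤ M :=
    ⟨∑ j, ‖xs j‖, fun i => Finset.single_le_sum (fun j _ => norm_nonneg (xs j))
      (Finset.mem_univ i)⟩
  set A : ℝ := ∑ i, α i with hA
  have hA0 : 0 ≤ A := Finset.sum_nonneg fun i _ => hα i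
  have hA1 : 0 < A + 1 := by linarith
  have hbA : 0 < -b / (A + 1) := div_pos (by linarith) hA1
  set L : ℝ := Real.log (-b / (A + 1)) with hL
  set t0 : ℝ := Real.sqrt (max 0 (-L / γ)) with ht0
  have ht0nn : 0 ≤ t0 := Real.sqrt_nonneg _
  apply (Metric.isBounded_closedBall (x := (0 : EuclideanSpace ℝ (Fin d)))
    (r := M + t0)).subset
  intro x hx
  simp only [Set.mem_setOf_eq] at hx
  simp only [Metric.mem_closedBall, dist_zero_right]
  by_contra hxR
  push_neg at hxR
  have key : ∀ i, y i * α i * Real.exp (-γ * ‖xs i - x‖ ^ 2) ≤ α i * (-b / (A + 1)) := by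
    intro i
    have hnorm : t0 ≤ ‖xs i - x‖ := by
      have := norm_sub_norm_le (x) (xs i)
      have h2 : ‖x - xs i‖ = ‖xs i - x‖ := by rw [norm_sub_rev]
      have := hM i
      linarith [norm_sub_norm_le x (xs i), h2 ▸ norm_sub_norm_le x (xs i)]
    have hsq : -L / γ ≤ ‖xs i - x‖ ^ 2 := by
      have h1 : t0 ^ 2 ≤ ‖xs i - x‖ ^ 2 := pow_le_pow_left₀ ht0nn hnorm 2
      have h2 : t0 ^ 2 = max 0 (-L / γ) := Real.sq_sqrt (le_max_left _ _)
      have h3 : -L / γ ≤ max 0 (-L / γ) := le_max_right _ _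
      linarith
    have hexp : Real.exp (-γ * ‖xs i - x‖ ^ 2) ≤ -b / (A + 1) := by
      have : -γ * ‖xs i - x‖ ^ 2 ≤ L := by
        have := (div_le_iff₀ hγ).mp hsq
        nlinarith
      calc Real.exp (-γ * ‖xs i - x‖ ^ 2) ≤ Real.exp L := Real.exp_le_exp.mpr this
        _ = -b / (A + 1) := Real.exp_log hbA
    have hya : y i * α i ≤ α i := by
      rcases hy i with h | h <;> simp [h] <;> linarith [hα i]
    calc y i * α i * Real.exp (-γ * ‖xs i - x‖ ^ 2)
        ≤ α i * Real.exp (-γ * ‖xs i - x‖ ^ 2) :=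
          mul_le_mul_of_nonneg_right hya (Real.exp_nonneg _)
      _ ≤ α i * (-b / (A + 1)) := mul_le_mul_of_nonneg_left hexp (hα i)
  have hsum : (∑ i, y i * α i * Real.exp (-γ * ‖xs i - x‖ ^ 2)) ≤ A * (-b / (A + 1)) := by
    rw [hA, Finset.sum_mul]
    exact Finset.sum_le_sum fun i _ => key i
  have : A * (-b / (A + 1)) + b < 0 := by
    rw [div_eq_inv_mul, ← mul_assoc]
    have h1 : A * (A + 1)⁻¹ < 1 := by
      rw [mul_inv_lt_iff₀ hA1]; linarith
    nlinarith [mul_pos (sub_pos.mpr h1) (neg_pos.mpr hb)]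
  linarith
end

section
/- (Theorem 1, converse direction.) If the bias term b is positive, then there exists d₀ > 0 such that every x ∈ ℝ^d satisfying ‖x − xᵢ‖ > d₀ for all i = 1, …, m has positive decision value f(x) = Σᵢ₌₁^m yᵢ αᵢ K(xᵢ, x) + b > 0; consequently, if d ≥ 1, the positively labeled region is an unbounded subset of ℝ^d. -/
/-- Theorem 1, converse direction: If the bias term b is positive, then
there exists d₀ > 0 such that every x with ‖x − xᵢ‖ > d₀ for all i has positive decision
value; consequently, if d ≥ 1, the positively labeled region is unbounded. -/
theorem positive_bias_unbounded_positive_region (d m : ℕ) (hm : 1 ≤ m) (γ : ℝ) (hγ : 0 < γ)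
    (xs : Fin m → EuclideanSpace ℝ (Fin d)) (y α : Fin m → ℝ)
    (hy : ∀ i, y i = -1 ∨ y i = 1) (hα : ∀ i, 0 ≤ α i)
    (b : ℝ) (hb : 0 < b) :
    (∃ d₀ > (0 : ℝ), ∀ x : EuclideanSpace ℝ (Fin d), (∀ i, ‖x - xs i‖ > d₀) →
      0 < (∑ i, y i * α i * Real.exp (-γ * ‖xs i - x‖ ^ 2)) + b) ∧
    (1 ≤ d → ¬ Bornology.IsBounded {x : EuclideanSpace ℝ (Fin d) |
      0 < (∑ i, y i * α i * Real.exp (-γ * ‖xs i - x‖ ^ 2)) + b}) := by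
  set S : ℝ := (∑ i, α i) + 1 with hS
  have hαsum : 0 ≤ ∑ i, α i := Finset.sum_nonneg fun i _ => hα i
  have hS0 : 0 < S := by positivity
  have hεpos : 0 < b / S := by positivity
  set q : ℝ := Real.sqrt (max 0 (-Real.log (b / S) / γ)) with hq
  have hq0 : 0 ≤ q := Real.sqrt_nonneg _
  have hq2 : q ^ 2 = max 0 (-Real.log (b / S) / γ) := Real.sq_sqrt (le_max_left _ _)
  set d₀ : ℝ := 1 + q with hd₀
  have hd₀pos : 0 < d₀ := by positivity
  have hkey : Real.exp (-γ * d₀ ^ 2) < b / S := by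
    rw [← Real.lt_log_iff_exp_lt hεpos]
    have h1 : -Real.log (b / S) / γ ≤ q ^ 2 := hq2 ▸ le_max_right _ _
    have h2 : q ^ 2 < d₀ ^ 2 := by nlinarith
    have : -Real.log (b / S) < γ * d₀ ^ 2 := by
      have := (div_le_iff₀ hγ).mp h1
      nlinarith
    linarith
  have hmain : ∀ x : EuclideanSpace ℝ (Fin d), (∀ i, ‖x - xs i‖ > d₀) →
      0 < (∑ i, y i * α i * Real.exp (-γ * ‖xs i - x‖ ^ 2)) + b := by
    intro x hx
    have hterm : ∀ i ∈ Finset.univ, -(α i * Real.exp (-γ * d₀ ^ 2)) ≤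
        y i * α i * Real.exp (-γ * ‖xs i - x‖ ^ 2) := by
      intro i _
      have hdist : d₀ ≤ ‖xs i - x‖ := by rw [norm_sub_rev]; exact (hx i).le
      have hexp : Real.exp (-γ * ‖xs i - x‖ ^ 2) ≤ Real.exp (-γ * d₀ ^ 2) := by
        apply Real.exp_le_exp.mpr
        have hsq : d₀ ^ 2 ≤ ‖xs i - x‖ ^ 2 := by nlinarith [hd₀pos.le]
        nlinarith [mul_le_mul_of_nonneg_left hsq hγ.le]
      have hmul : α i * Real.exp (-γ * ‖xs i - x‖ ^ 2) ≤ α i * Real.exp (-γ * d₀ ^ 2) :=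
        mul_le_mul_of_nonneg_left hexp (hα i)
      rcases hy i with h | h <;> rw [h]
      · linarith
      · have : 0 ≤ α i * Real.exp (-γ * ‖xs i - x‖ ^ 2) :=
          mul_nonneg (hα i) (Real.exp_pos _).le
        nlinarith [Real.exp_pos (-γ * d₀ ^ 2)]
    have hsum : ∑ i, -(α i * Real.exp (-γ * d₀ ^ 2)) ≤
        ∑ i, y i * α i * Real.exp (-γ * ‖xs i - x‖ ^ 2) :=
      Finset.sum_le_sum hterm
    have hleft : ∑ i, -(α i * Real.exp (-γ * d₀ ^ 2)) =
        -((∑ i, α i) * Real.exp (-γ * d₀ ^ 2)) := by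
      rw [Finset.sum_neg_distrib, Finset.sum_mul]
    have hbound : (∑ i, α i) * Real.exp (-γ * d₀ ^ 2) < b := by
      calc (∑ i, α i) * Real.exp (-γ * d₀ ^ 2) ≤ (∑ i, α i) * (b / S) :=
            mul_le_mul_of_nonneg_left hkey.le hαsum
        _ < S * (b / S) := by apply mul_lt_mul_of_pos_right _ hεpos; linarith
        _ = b := by field_simp
    rw [hleft] at hsum
    linarith
  refine ⟨⟨d₀, hd₀pos, hmain⟩, ?_⟩
  intro hd hbd
  rw [Metric.isBounded_iff_subset_closedBall 0] at hbd
  obtain ⟨C, hC⟩ := hbd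
  set M : ℝ := ∑ i, ‖xs i‖ with hM
  have hM0 : 0 ≤ M := Finset.sum_nonneg fun i _ => norm_nonneg _
  set t : ℝ := max (C + 1) (d₀ + M + 1) with ht
  have ht1 : d₀ + M + 1 ≤ t := le_max_right _ _
  have ht0 : 0 < t := by have := hd₀pos; linarith
  set e : EuclideanSpace ℝ (Fin d) := EuclideanSpace.single (⟨0, hd⟩ : Fin d) (1 : ℝ) with he
  have hne : ‖e‖ = 1 := by
    rw [he, EuclideanSpace.norm_single]; norm_num
  set x : EuclideanSpace ℝ (Fin d) := t • e with hxdef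
  have hnx : ‖x‖ = t := by
    rw [hxdef, norm_smul, hne, Real.norm_eq_abs, abs_of_pos ht0, mul_one]
  have hxmem : x ∈ {x : EuclideanSpace ℝ (Fin d) |
      0 < (∑ i, y i * α i * Real.exp (-γ * ‖xs i - x‖ ^ 2)) + b} := by
    apply hmain
    intro i
    have hxi : ‖xs i‖ ≤ M := by
      rw [hM]
      exact Finset.single_le_sum (fun j _ => norm_nonneg (xs j)) (Finset.mem_univ i)
    have : ‖x‖ - ‖xs i‖ ≤ ‖x - xs i‖ := by
      have := norm_sub_norm_le x (xs i)
      linarith [le_abs_self (‖x‖ - ‖xs i‖)]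
    rw [hnx] at this
    linarith
  have := hC hxmem
  rw [Metric.mem_closedBall, dist_zero_right, hnx] at this
  have : C + 1 ≤ t := le_max_left _ _
  linarith [le_max_left (C + 1) (d₀ + M + 1)]
end

section
/- (Theorem 1.) Assume d ≥ 1 and b ≠ 0. Then the positively labeled region {x ∈ ℝ^d : Σᵢ₌₁^m yᵢ αᵢ K(xᵢ, x) + b > 0} is a bounded subset of ℝ^d if and only if the bias term b is negative. -/
/-- Theorem 1: Assume d ≥ 1 and b ≠ 0. Then the positively labeled region
{x : Σᵢ yᵢ αᵢ K(xᵢ, x) + b > 0} is bounded if and only if the bias term b is negative. -/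
theorem bounded_positive_region_iff_negative_bias (d m : ℕ) (hd : 1 ≤ d) (hm : 1 ≤ m)
    (γ : ℝ) (hγ : 0 < γ)
    (xs : Fin m → EuclideanSpace ℝ (Fin d)) (y α : Fin m → ℝ)
    (hy : ∀ i, y i = -1 ∨ y i = 1) (hα : ∀ i, 0 ≤ α i)
    (b : ℝ) (hb : b ≠ 0) :
    Bornology.IsBounded {x : EuclideanSpace ℝ (Fin d) |
      0 < (∑ i, y i * α i * Real.exp (-γ * ‖xs i - x‖ ^ 2)) + b} ↔ b < 0 := by
  have hne : Nonempty (Fin m) := ⟨⟨0, hm⟩⟩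
  set M : ℝ := Finset.univ.sup' Finset.univ_nonempty (fun i => ‖xs i‖) with hM
  have hMle : ∀ i, ‖xs i‖ ≤ M := fun i =>
    Finset.le_sup' (fun i => ‖xs i‖) (Finset.mem_univ i)
  have hM0 : 0 ≤ M := le_trans (norm_nonneg _) (hMle ⟨0, hm⟩)
  set A : ℝ := ∑ i, α i with hA
  have hA0 : 0 ≤ A := Finset.sum_nonneg (fun i _ => hα i)
  -- key estimate
  have key : ∀ t : ℝ, 0 ≤ t → ∀ x : EuclideanSpace ℝ (Fin d), M + t ≤ ‖x‖ →
      |∑ i, y i * α i * Real.exp (-γ * ‖xs i - x‖ ^ 2)| ≤ A * Real.exp (-γ * t ^ 2) := by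
    intro t ht x hx
    calc |∑ i, y i * α i * Real.exp (-γ * ‖xs i - x‖ ^ 2)|
        ≤ ∑ i, |y i * α i * Real.exp (-γ * ‖xs i - x‖ ^ 2)| :=
          Finset.abs_sum_le_sum_abs _ _
      _ ≤ ∑ i, α i * Real.exp (-γ * t ^ 2) := by
          apply Finset.sum_le_sum
          intro i _
          have hyi : |y i| = 1 := by rcases hy i with h | h <;> simp [h]
          have hnorm : t ≤ ‖xs i - x‖ := by
            have h1 : ‖x‖ - ‖xs i‖ ≤ ‖x - xs i‖ := norm_sub_norm_le _ _
            have h2 : ‖x - xs i‖ = ‖xs i - x‖ := norm_sub_rev _ _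
            have := hMle i
            linarith
          have hsq : t ^ 2 ≤ ‖xs i - x‖ ^ 2 := pow_le_pow_left₀ ht hnorm 2
          have hexp : Real.exp (-γ * ‖xs i - x‖ ^ 2) ≤ Real.exp (-γ * t ^ 2) := by
            apply Real.exp_le_exp.2
            nlinarith
          rw [abs_mul, abs_mul, hyi, abs_of_nonneg (hα i),
            abs_of_pos (Real.exp_pos _), one_mul]
          exact mul_le_mul_of_nonneg_left hexp (hα i)
      _ = A * Real.exp (-γ * t ^ 2) := by rw [hA, Finset.sum_mul]
  -- choose t ≥ 0 with A * exp(-γ t²) < |b|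
  have hten : Filter.Tendsto (fun t : ℝ => A * Real.exp (-γ * t ^ 2)) Filter.atTop (nhds 0) := by
    have h2 : Filter.Tendsto (fun t : ℝ => γ * t ^ 2) Filter.atTop Filter.atTop :=
      (Filter.tendsto_pow_atTop two_ne_zero).const_mul_atTop hγ
    have h1 : Filter.Tendsto (fun t : ℝ => -γ * t ^ 2) Filter.atTop Filter.atBot := by
      have h := Filter.tendsto_neg_atTop_atBot.comp h2
      convert h using 2 with t
      simp [Function.comp, neg_mul]
    have h3 : Filter.Tendsto (fun t : ℝ => Real.exp (-γ * t ^ 2)) Filter.atTop (nhds 0) :=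
      Real.tendsto_exp_atBot.comp h1
    simpa using h3.const_mul A
  have habs : 0 < |b| := abs_pos.2 hb
  obtain ⟨t, ht0, htlt⟩ : ∃ t : ℝ, 0 ≤ t ∧ A * Real.exp (-γ * t ^ 2) < |b| := by
    have h1 : ∀ᶠ t : ℝ in Filter.atTop, A * Real.exp (-γ * t ^ 2) < |b| :=
      hten.eventually (gt_mem_nhds habs)
    have h2 : ∀ᶠ t : ℝ in Filter.atTop, 0 ≤ t := Filter.eventually_ge_atTop 0
    obtain ⟨t, h2t, h1t⟩ := (h2.and h1).exists
    exact ⟨t, h2t, h1t⟩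
  constructor
  · -- bounded → b < 0
    intro hbd
    by_contra hbneg
    have hbpos : 0 < b := lt_of_le_of_ne (not_lt.1 hbneg) (Ne.symm hb)
    rw [isBounded_iff_forall_norm_le] at hbd
    obtain ⟨C, hC⟩ := hbd
    -- construct a far away point in the set
    set r : ℝ := max (C + 1) (M + t) with hr
    set e : EuclideanSpace ℝ (Fin d) := EuclideanSpace.single (⟨0, hd⟩ : Fin d) (1 : ℝ) with he
    have hex : ‖e‖ = 1 := by
      rw [he, EuclideanSpace.norm_single]; norm_num
    have hr0 : 0 ≤ r := le_trans (by positivity) (le_max_right _ _)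
    set x : EuclideanSpace ℝ (Fin d) := r • e with hx
    have hxn : ‖x‖ = r := by
      rw [hx, norm_smul, hex, mul_one, Real.norm_eq_abs, abs_of_nonneg hr0]
    have hxfar : M + t ≤ ‖x‖ := by rw [hxn]; exact le_max_right _ _
    have hxin : x ∈ {x : EuclideanSpace ℝ (Fin d) |
        0 < (∑ i, y i * α i * Real.exp (-γ * ‖xs i - x‖ ^ 2)) + b} := by
      have h1 := key t ht0 x hxfar
      have h2 : -(A * Real.exp (-γ * t ^ 2)) ≤
          ∑ i, y i * α i * Real.exp (-γ * ‖xs i - x‖ ^ 2) := neg_abs_le _ |>.trans' (by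
        exact neg_le_neg h1)
      have hbb : |b| = b := abs_of_pos hbpos
      simp only [Set.mem_setOf_eq]
      linarith
    have := hC x hxin
    rw [hxn] at this
    have : C + 1 ≤ C := le_trans (le_max_left _ _) this
    linarith
  · -- b < 0 → bounded
    intro hbneg
    rw [isBounded_iff_forall_norm_le]
    refine ⟨M + t, fun x hx => ?_⟩
    by_contra hfar
    push_neg at hfar
    have h1 := key t ht0 x hfar.le
    have h2 : ∑ i, y i * α i * Real.exp (-γ * ‖xs i - x‖ ^ 2) ≤
        A * Real.exp (-γ * t ^ 2) := (le_abs_self _).trans h1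
    have hbb : |b| = -b := abs_of_neg hbneg
    simp only [Set.mem_setOf_eq] at hx
    linarith
end

section
/- (Proposition 2, bound in Case 1.) Let i be an index with yᵢ = 1, let α₁, …, α_m satisfy 0 ≤ αⱼ ≤ C for all j and Σⱼ₌₁^m αⱼ yⱼ = λ, and suppose the bias term satisfies the KKT expression b = yᵢ − Σⱼ₌₁^m αⱼ yⱼ K(xᵢ, xⱼ). Then b ≤ 1 + C · Σ_{j : yⱼ = 1} (1 − K(xᵢ, xⱼ)) − λ. In particular, if λ > 1 + C · Σ_{j : yⱼ = 1} (1 − K(xᵢ, xⱼ)), then b < 0. -/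
/-- Proposition 2, bound in Case 1: For an index i with yᵢ = 1, feasible
multipliers with Σⱼ αⱼ yⱼ = λ, and bias b = yᵢ − Σⱼ αⱼ yⱼ K(xᵢ, xⱼ), we have
b ≤ 1 + C·Σ_{j : yⱼ = 1} (1 − K(xᵢ, xⱼ)) − λ; in particular, if
λ > 1 + C·Σ_{j : yⱼ = 1} (1 − K(xᵢ, xⱼ)) then b < 0. -/
theorem bias_bound_case_one (d m : ℕ) (hm : 1 ≤ m) (γ : ℝ) (hγ : 0 < γ)
    (xs : Fin m → EuclideanSpace ℝ (Fin d)) (y : Fin m → ℝ)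
    (hy : ∀ j, y j = -1 ∨ y j = 1) (C : ℝ) (hC : 0 < C)
    (i : Fin m) (hyi : y i = 1)
    (α : Fin m → ℝ) (hα : ∀ j, 0 ≤ α j ∧ α j ≤ C)
    (lam : ℝ) (hlam : ∑ j, α j * y j = lam)
    (b : ℝ) (hb : b = y i - ∑ j, α j * y j * Real.exp (-γ * ‖xs i - xs j‖ ^ 2)) :
    b ≤ 1 + C * ∑ j ∈ Finset.univ.filter (fun j => y j = 1),
          (1 - Real.exp (-γ * ‖xs i - xs j‖ ^ 2)) - lam ∧
    (1 + C * ∑ j ∈ Finset.univ.filter (fun j => y j = 1),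
          (1 - Real.exp (-γ * ‖xs i - xs j‖ ^ 2)) < lam → b < 0) := by
  set K : Fin m → ℝ := fun j => Real.exp (-γ * ‖xs i - xs j‖ ^ 2) with hK
  have hK1 : ∀ j, 0 ≤ 1 - K j := by
    intro j
    have : K j ≤ 1 := by
      apply Real.exp_le_one_iff.2
      have : (0:ℝ) ≤ ‖xs i - xs j‖ ^ 2 := sq_nonneg _
      nlinarith
    linarith
  have key : b ≤ 1 + C * ∑ j ∈ Finset.univ.filter (fun j => y j = 1),
      (1 - K j) - lam := by
    have hsum : lam - ∑ j, α j * y j * K j = ∑ j, α j * y j * (1 - K j) := by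
      rw [← hlam, ← Finset.sum_sub_distrib]
      apply Finset.sum_congr rfl
      intro j _
      ring
    have hbound : ∑ j, α j * y j * (1 - K j)
        ≤ ∑ j, (if y j = 1 then C * (1 - K j) else 0) := by
      apply Finset.sum_le_sum
      intro j _
      rcases hy j with h | h
      · simp only [h]
        have : (-1:ℝ) ≠ 1 := by norm_num
        rw [if_neg this]
        nlinarith [(hα j).1, hK1 j]
      · rw [if_pos h, h]
        nlinarith [(hα j).2, hK1 j]
    have heq : ∑ j, (if y j = 1 then C * (1 - K j) else 0)
        = C * ∑ j ∈ Finset.univ.filter (fun j => y j = 1), (1 - K j) := by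
      rw [Finset.mul_sum, Finset.sum_filter]
    rw [hb, hyi]
    have := hbound
    rw [heq] at this
    linarith [hsum, this]
  refine ⟨key, fun h => by linarith⟩
end

section
/- (Proposition 2, bound in Case 2.) Let i be an index with yᵢ = −1, let α₁, …, α_m satisfy 0 ≤ αⱼ ≤ C for all j and Σⱼ₌₁^m αⱼ yⱼ = λ, and suppose the bias term satisfies the KKT expression b = yᵢ − Σⱼ₌₁^m αⱼ yⱼ K(xᵢ, xⱼ). Then b ≤ −1 + C · Σ_{j : yⱼ = 1} (1 − K(xᵢ, xⱼ)) − λ. In particular, if λ > C · Σ_{j : yⱼ = 1} (1 − K(xᵢ, xⱼ)) − 1, then b < 0. -/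
/-- Proposition 2, bound in Case 2: For an index i with yᵢ = −1, feasible
multipliers with Σⱼ αⱼ yⱼ = λ, and bias b = yᵢ − Σⱼ αⱼ yⱼ K(xᵢ, xⱼ), we have
b ≤ −1 + C·Σ_{j : yⱼ = 1} (1 − K(xᵢ, xⱼ)) − λ; in particular, if
λ > C·Σ_{j : yⱼ = 1} (1 − K(xᵢ, xⱼ)) − 1 then b < 0. -/
theorem bias_bound_case_two (d m : ℕ) (hm : 1 ≤ m) (γ : ℝ) (hγ : 0 < γ)
    (xs : Fin m → EuclideanSpace ℝ (Fin d)) (y : Fin m → ℝ)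
    (hy : ∀ j, y j = -1 ∨ y j = 1) (C : ℝ) (hC : 0 < C)
    (i : Fin m) (hyi : y i = -1)
    (α : Fin m → ℝ) (hα : ∀ j, 0 ≤ α j ∧ α j ≤ C)
    (lam : ℝ) (hlam : ∑ j, α j * y j = lam)
    (b : ℝ) (hb : b = y i - ∑ j, α j * y j * Real.exp (-γ * ‖xs i - xs j‖ ^ 2)) :
    b ≤ -1 + C * ∑ j ∈ Finset.univ.filter (fun j => y j = 1),
          (1 - Real.exp (-γ * ‖xs i - xs j‖ ^ 2)) - lam ∧
    (C * ∑ j ∈ Finset.univ.filter (fun j => y j = 1),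
          (1 - Real.exp (-γ * ‖xs i - xs j‖ ^ 2)) - 1 < lam → b < 0) := by
  set K : Fin m → ℝ := fun j => Real.exp (-γ * ‖xs i - xs j‖ ^ 2) with hK
  have hKle : ∀ j, K j ≤ 1 := by
    intro j
    have : -γ * ‖xs i - xs j‖ ^ 2 ≤ 0 := by
      have := sq_nonneg ‖xs i - xs j‖
      nlinarith
    exact Real.exp_le_one_iff.mpr this
  have hmain :
      b ≤ -1 + C * ∑ j ∈ Finset.univ.filter (fun j => y j = 1), (1 - K j) - lam := by
    have e : ∑ j, α j * y j * (1 - K j) = (∑ j, α j * y j) - ∑ j, α j * y j * K j := by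
      rw [← Finset.sum_sub_distrib]
      exact Finset.sum_congr rfl (fun j _ => by ring)
    have hsplit : b = -1 - lam + ∑ j, α j * y j * (1 - K j) := by
      rw [hb, hyi, ← hlam]
      linarith [e]
    have hbound : ∑ j, α j * y j * (1 - K j)
        ≤ ∑ j ∈ Finset.univ.filter (fun j => y j = 1), C * (1 - K j) := by
      rw [← Finset.sum_filter_add_sum_filter_not Finset.univ (fun j => y j = 1)
        (fun j => α j * y j * (1 - K j))]
      have h1 : ∑ j ∈ Finset.univ.filter (fun j => y j = 1), α j * y j * (1 - K j)
          ≤ ∑ j ∈ Finset.univ.filter (fun j => y j = 1), C * (1 - K j) := by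
        apply Finset.sum_le_sum
        intro j hj
        rw [Finset.mem_filter] at hj
        rw [hj.2]
        have h1K : 0 ≤ 1 - K j := by linarith [hKle j]
        have := (hα j).1
        have := (hα j).2
        nlinarith
      have h2 : ∑ j ∈ Finset.univ.filter (fun j => ¬ y j = 1), α j * y j * (1 - K j) ≤ 0 := by
        apply Finset.sum_nonpos
        intro j hj
        rw [Finset.mem_filter] at hj
        have hyj : y j = -1 := (hy j).resolve_right hj.2
        rw [hyj]
        have h1K : 0 ≤ 1 - K j := by linarith [hKle j]
        have := (hα j).1
        nlinarith
      linarith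
    rw [← Finset.mul_sum] at hbound
    linarith [hsplit, hbound]
  refine ⟨hmain, fun h => ?_⟩
  linarith
end

section
/- (Proposition 2, existence in Case 1.) Let i be an index with yᵢ = 1, suppose C ≥ 1 and the number m_p of indices j with yⱼ = 1 satisfies m_p ≥ 2. Then there exists λ with 0 ≤ λ < C · m_p such that for all multipliers α₁, …, α_m with 0 ≤ αⱼ ≤ C for all j and Σⱼ₌₁^m αⱼ yⱼ = λ, any bias term given by the KKT expression b = yᵢ − Σⱼ₌₁^m αⱼ yⱼ K(xᵢ, xⱼ) satisfies b < 0. -/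
/-- Proposition 2, existence in Case 1: Let i satisfy yᵢ = 1, C ≥ 1 and
m_p ≥ 2. Then there exists λ with 0 ≤ λ < C·m_p such that for all feasible multipliers
with Σⱼ αⱼ yⱼ = λ, any KKT bias b = yᵢ − Σⱼ αⱼ yⱼ K(xᵢ, xⱼ) satisfies b < 0. -/
theorem exists_lambda_negative_bias_case_one (d m : ℕ) (hm : 1 ≤ m) (γ : ℝ) (hγ : 0 < γ)
    (xs : Fin m → EuclideanSpace ℝ (Fin d)) (y : Fin m → ℝ)
    (hy : ∀ j, y j = -1 ∨ y j = 1) (C : ℝ) (hC : 1 ≤ C)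
    (i : Fin m) (hyi : y i = 1)
    (hmp : 2 ≤ (Finset.univ.filter (fun j => y j = 1)).card) :
    ∃ lam : ℝ, 0 ≤ lam ∧
      lam < C * ((Finset.univ.filter (fun j => y j = 1)).card : ℝ) ∧
      ∀ α : Fin m → ℝ, (∀ j, 0 ≤ α j ∧ α j ≤ C) → ∑ j, α j * y j = lam →
        ∀ b : ℝ, b = y i - ∑ j, α j * y j * Real.exp (-γ * ‖xs i - xs j‖ ^ 2) →
          b < 0 := by
  classical
  set P := Finset.univ.filter (fun j => y j = 1) with hP
  have hiP : i ∈ P := by simp [hP, hyi]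
  obtain ⟨j0, hj0P, hj0i⟩ : ∃ j0 ∈ P, j0 ≠ i := by
    obtain ⟨j0, hj0, hne⟩ := Finset.exists_mem_ne (by omega : 1 < P.card) i
    exact ⟨j0, hj0, hne⟩
  set κ := Real.exp (-γ * ‖xs i - xs j0‖ ^ 2) with hκ
  have hκpos : 0 < κ := Real.exp_pos _
  have hκle : κ ≤ 1 := by
    apply Real.exp_le_one_iff.mpr
    have : 0 ≤ ‖xs i - xs j0‖ ^ 2 := sq_nonneg _
    nlinarith
  set ε := κ / (2 * (2 + κ)) with hε
  have hden : 0 < 2 * (2 + κ) := by linarith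
  have hεpos : 0 < ε := div_pos hκpos hden
  have hεdef : ε * (2 * (2 + κ)) = κ := by
    rw [hε]; exact div_mul_cancel₀ _ hden.ne'
  have hεsmall : ε ≤ 1 / 2 := by nlinarith
  have hcard : (2 : ℝ) ≤ (P.card : ℝ) := by exact_mod_cast hmp
  refine ⟨C * P.card - ε, by nlinarith, by linarith, ?_⟩
  intro α hα hsum b hb
  -- split sums over P and its complement
  have hyneg : ∀ j ∈ Finset.univ.filter (fun j => ¬ y j = 1), y j = -1 := by
    intro j hj
    rcases hy j with h | h
    · exact h
    · simp [h] at hj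
  set A := ∑ j ∈ P, α j with hA
  set B := ∑ j ∈ Finset.univ.filter (fun j => ¬ y j = 1), α j with hB
  have hsplit : A - B = C * P.card - ε := by
    have h1 := Finset.sum_filter_add_sum_filter_not Finset.univ
      (fun j => y j = 1) (fun j => α j * y j)
    have h2 : ∑ j ∈ P, α j * y j = A := by
      apply Finset.sum_congr rfl
      intro j hj
      have : y j = 1 := by simpa [hP] using hj
      simp [this]
    have h3 : ∑ j ∈ Finset.univ.filter (fun j => ¬ y j = 1), α j * y j = -B := by
      rw [hB, ← Finset.sum_neg_distrib]
      apply Finset.sum_congr rfl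
      intro j hj
      rw [hyneg j hj]; ring
    rw [← hsum]
    rw [← h1, h2, h3]; ring
  have hBnonneg : 0 ≤ B := Finset.sum_nonneg (fun j _ => (hα j).1)
  have hAle : A ≤ C * P.card := by
    have := Finset.sum_le_sum (fun j (_ : j ∈ P) => (hα j).2)
    simpa [mul_comm] using this
  have hBle : B ≤ ε := by linarith
  -- lower bound α i + α j0
  have hj0P' : j0 ∈ P.erase i := Finset.mem_erase.mpr ⟨hj0i, hj0P⟩
  have hAsplit : A = α i + (α j0 + ∑ j ∈ (P.erase i).erase j0, α j) := by
    rw [hA, ← Finset.add_sum_erase _ _ hiP, ← Finset.add_sum_erase _ _ hj0P']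
  have hrest : ∑ j ∈ (P.erase i).erase j0, α j ≤ C * (P.card - 2) := by
    have hc : (((P.erase i).erase j0).card : ℝ) = (P.card : ℝ) - 2 := by
      rw [Finset.card_erase_of_mem hj0P', Finset.card_erase_of_mem hiP]
      have : 2 ≤ P.card := hmp
      push_cast [Nat.sub_sub]
      rw [Nat.cast_sub this]
      push_cast; ring
    calc ∑ j ∈ (P.erase i).erase j0, α j
        ≤ ∑ _j ∈ (P.erase i).erase j0, C := Finset.sum_le_sum (fun j _ => (hα j).2)
      _ = (((P.erase i).erase j0).card : ℝ) * C := by simp [mul_comm]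
      _ = C * (P.card - 2) := by rw [hc]; ring
  have hsum2 : 2 * C - ε ≤ α i + α j0 := by nlinarith
  have hαi : C - ε ≤ α i := by have := (hα j0).2; linarith
  have hαj0 : C - ε ≤ α j0 := by have := (hα i).2; linarith
  -- lower bound the kernel sum S
  set S := ∑ j, α j * y j * Real.exp (-γ * ‖xs i - xs j‖ ^ 2) with hS
  have hKpos : ∀ j, 0 < Real.exp (-γ * ‖xs i - xs j‖ ^ 2) := fun j => Real.exp_pos _
  have hKle : ∀ j, Real.exp (-γ * ‖xs i - xs j‖ ^ 2) ≤ 1 := by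
    intro j
    apply Real.exp_le_one_iff.mpr
    nlinarith [sq_nonneg ‖xs i - xs j‖]
  have hSsplit : S = (∑ j ∈ P, α j * Real.exp (-γ * ‖xs i - xs j‖ ^ 2))
      - (∑ j ∈ Finset.univ.filter (fun j => ¬ y j = 1),
          α j * Real.exp (-γ * ‖xs i - xs j‖ ^ 2)) := by
    rw [hS, ← Finset.sum_filter_add_sum_filter_not Finset.univ (fun j => y j = 1)]
    congr 1
    · apply Finset.sum_congr rfl
      intro j hj
      have : y j = 1 := by simpa [hP] using hj
      simp [this]
    · rw [← Finset.sum_neg_distrib]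
      apply Finset.sum_congr rfl
      intro j hj
      rw [hyneg j hj]; ring
  have hPos : α i * 1 + α j0 * κ ≤ ∑ j ∈ P, α j * Real.exp (-γ * ‖xs i - xs j‖ ^ 2) := by
    have hsub : {i, j0} ⊆ P := by
      intro j hj
      rcases Finset.mem_insert.mp hj with h | h
      · exact h ▸ hiP
      · exact (Finset.mem_singleton.mp h) ▸ hj0P
    have := Finset.sum_le_sum_of_subset_of_nonneg hsub
      (fun j _ _ => mul_nonneg (hα j).1 (le_of_lt (hKpos j)))
    have hpair : ∑ j ∈ ({i, j0} : Finset (Fin m)),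
        α j * Real.exp (-γ * ‖xs i - xs j‖ ^ 2)
        = α i * 1 + α j0 * κ := by
      rw [Finset.sum_pair (Ne.symm hj0i)]
      have hone : Real.exp (-γ * ‖xs i - xs i‖ ^ 2) = 1 := by
        simp
      rw [hone]
    rw [← hpair]; exact this
  have hNeg : ∑ j ∈ Finset.univ.filter (fun j => ¬ y j = 1),
      α j * Real.exp (-γ * ‖xs i - xs j‖ ^ 2) ≤ B := by
    rw [hB]
    apply Finset.sum_le_sum
    intro j _
    have := hKle j
    exact mul_le_of_le_one_right (hα j).1 (hKle j)
  have hSge : (C - ε) * (1 + κ) - ε ≤ S := by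
    rw [hSsplit]
    have h1 : (C - ε) * 1 + (C - ε) * κ ≤ α i * 1 + α j0 * κ := by
      have := mul_le_mul_of_nonneg_right hαj0 hκpos.le
      linarith
    have h2 : (C - ε) * (1 + κ) = (C - ε) * 1 + (C - ε) * κ := by ring
    linarith
  have hexp : (1 - ε) * (1 + κ) ≤ (C - ε) * (1 + κ) :=
    mul_le_mul_of_nonneg_right (by linarith) (by linarith)
  have hkey : (1 - ε) * (1 + κ) = 1 + κ / 2 + ε := by
    linear_combination (-(1:ℝ)/2) * hεdef
  have : 1 < S := by linarith
  rw [hb, hyi]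
  linarith
end

section
/- (Proposition 2, existence in Case 2.) Let i be an index with yᵢ = −1 and suppose the number m_p of indices j with yⱼ = 1 satisfies m_p ≥ 1. Then for any C > 0 there exists λ with 0 ≤ λ < C · m_p such that for all multipliers α₁, …, α_m with 0 ≤ αⱼ ≤ C for all j and Σⱼ₌₁^m αⱼ yⱼ = λ, any bias term given by the KKT expression b = yᵢ − Σⱼ₌₁^m αⱼ yⱼ K(xᵢ, xⱼ) satisfies b < 0. -/
/-- Proposition 2, existence in Case 2: Let i satisfy yᵢ = −1 and m_p ≥ 1.
Then for any C > 0 there exists λ with 0 ≤ λ < C·m_p such that for all feasible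
multipliers with Σⱼ αⱼ yⱼ = λ, any KKT bias b = yᵢ − Σⱼ αⱼ yⱼ K(xᵢ, xⱼ) satisfies b < 0. -/
theorem exists_lambda_negative_bias_case_two (d m : ℕ) (hm : 1 ≤ m) (γ : ℝ) (hγ : 0 < γ)
    (xs : Fin m → EuclideanSpace ℝ (Fin d)) (y : Fin m → ℝ)
    (hy : ∀ j, y j = -1 ∨ y j = 1) (C : ℝ) (hC : 0 < C)
    (i : Fin m) (hyi : y i = -1)
    (hmp : 1 ≤ (Finset.univ.filter (fun j => y j = 1)).card) :
    ∃ lam : ℝ, 0 ≤ lam ∧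
      lam < C * ((Finset.univ.filter (fun j => y j = 1)).card : ℝ) ∧
      ∀ α : Fin m → ℝ, (∀ j, 0 ≤ α j ∧ α j ≤ C) → ∑ j, α j * y j = lam →
        ∀ b : ℝ, b = y i - ∑ j, α j * y j * Real.exp (-γ * ‖xs i - xs j‖ ^ 2) →
          b < 0 := by
  classical
  set P := Finset.univ.filter (fun j => y j = 1) with hP
  set mp : ℝ := (P.card : ℝ) with hmpdef
  have hmp1 : (1:ℝ) ≤ mp := by rw [hmpdef]; exact_mod_cast hmp
  have hCmp : 0 < C * mp := by nlinarith
  refine ⟨max 0 (C * mp - 1/2), le_max_left _ _, max_lt hCmp (by linarith), ?_⟩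
  intro α hα hsum b hb
  set K : Fin m → ℝ := fun j => Real.exp (-γ * ‖xs i - xs j‖ ^ 2) with hK
  have hK01 : ∀ j, 0 < K j ∧ K j ≤ 1 := by
    intro j
    refine ⟨Real.exp_pos _, Real.exp_le_one_iff.mpr ?_⟩
    nlinarith [sq_nonneg ‖xs i - xs j‖]
  set N := Finset.univ.filter (fun j => ¬ y j = 1) with hN
  have hyN : ∀ j ∈ N, y j = -1 := by
    intro j hj
    rcases hy j with h | h
    · exact h
    · simp [hN, Finset.mem_filter] at hj; exact absurd h hj
  -- split the constraint sum
  have hsplit : ∑ j, α j * y j = (∑ j ∈ P, α j) - ∑ j ∈ N, α j := by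
    rw [← Finset.sum_filter_add_sum_filter_not Finset.univ (fun j => y j = 1)]
    rw [sub_eq_add_neg, ← Finset.sum_neg_distrib]
    congr 1
    · exact Finset.sum_congr rfl (fun j hj => by
        have : y j = 1 := (Finset.mem_filter.mp hj).2
        rw [this, mul_one])
    · exact Finset.sum_congr rfl (fun j hj => by
        have : y j = -1 := hyN j hj
        rw [this]; ring)
  have hPle : ∑ j ∈ P, α j ≤ C * mp := by
    have := Finset.sum_le_card_nsmul P α C (fun j _ => (hα j).2)
    simpa [mul_comm, nsmul_eq_mul] using this
  have hNle : ∑ j ∈ N, α j ≤ 1/2 := by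
    have h1 : (∑ j ∈ P, α j) - ∑ j ∈ N, α j = max 0 (C * mp - 1/2) := by
      rw [← hsplit]; exact hsum
    have h2 : C * mp - 1/2 ≤ max 0 (C * mp - 1/2) := le_max_right _ _
    linarith
  -- bound the kernel sum from below
  have hSlb : -(1/2) ≤ ∑ j, α j * y j * K j := by
    have hsplit2 : ∑ j, α j * y j * K j
        = (∑ j ∈ P, α j * y j * K j) + ∑ j ∈ N, α j * y j * K j :=
      (Finset.sum_filter_add_sum_filter_not Finset.univ (fun j => y j = 1) _).symm
    have hPpos : 0 ≤ ∑ j ∈ P, α j * y j * K j := by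
      apply Finset.sum_nonneg
      intro j hj
      have : y j = 1 := (Finset.mem_filter.mp hj).2
      rw [this, mul_one]
      exact mul_nonneg (hα j).1 (hK01 j).1.le
    have hNlb : -(∑ j ∈ N, α j) ≤ ∑ j ∈ N, α j * y j * K j := by
      rw [← Finset.sum_neg_distrib]
      apply Finset.sum_le_sum
      intro j hj
      have : y j = -1 := hyN j hj
      rw [this]
      have h0 := (hα j).1
      have h1 := (hK01 j).1.le
      have h2 := (hK01 j).2
      nlinarith
    rw [hsplit2]
    linarith
  rw [hb, hyi]
  linarith
end

section
/- (Bounded known-labeled open space for OVA SSVM.) Let n ≥ 1 and for each class k = 1, …, n let f_k(x) = Σᵢ₌₁^{m_k} y_{k,i} α_{k,i} exp(−γ_k ‖x_{k,i} − x‖²) + b_k be an RBF SVM decision function with support vectors x_{k,i} ∈ ℝ^d, labels y_{k,i} ∈ {−1, 1}, multipliers α_{k,i} ≥ 0, kernel parameter γ_k > 0, and bias term b_k. If b_k < 0 for every k, then the set of points classified as known, {x ∈ ℝ^d : ∃ k, f_k(x) > 0}, is a bounded subset of ℝ^d. -/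
/-- Bounded known-labeled open space for OVA SSVM: If every binary RBF
SVM decision function f_k(x) = Σᵢ y_{k,i} α_{k,i} exp(−γ_k ‖x_{k,i} − x‖²) + b_k has a
negative bias term b_k, then the set of points classified as known,
{x : ∃ k, f_k(x) > 0}, is bounded. -/
theorem ova_ssvm_bounded_klos (d n : ℕ) (hn : 1 ≤ n) (m : Fin n → ℕ)
    (xs : (k : Fin n) → Fin (m k) → EuclideanSpace ℝ (Fin d))
    (y α : (k : Fin n) → Fin (m k) → ℝ)
    (hy : ∀ k i, y k i = -1 ∨ y k i = 1) (hα : ∀ k i, 0 ≤ α k i)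
    (γ : Fin n → ℝ) (hγ : ∀ k, 0 < γ k)
    (b : Fin n → ℝ) (hb : ∀ k, b k < 0) :
    Bornology.IsBounded {x : EuclideanSpace ℝ (Fin d) |
      ∃ k, 0 < (∑ i, y k i * α k i * Real.exp (-(γ k) * ‖xs k i - x‖ ^ 2)) + b k} := by
  classical
  set A : Fin n → ℝ := fun k => ∑ i, α k i with hA
  have hA0 : ∀ k, 0 ≤ A k := fun k => Finset.sum_nonneg fun i _ => hα k i
  set c : Fin n → ℝ := fun k => (-b k) / (A k + 1) with hc
  have hc0 : ∀ k, 0 < c k := fun k =>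
    div_pos (by linarith [hb k]) (by linarith [hA0 k])
  set s : Fin n → ℝ := fun k => max 1 (-Real.log (c k) / γ k + 1) with hs
  have hs0 : ∀ k, 0 ≤ s k := fun k => le_trans zero_le_one (le_max_left _ _)
  set r : Fin n → ℝ := fun k => Real.sqrt (s k) with hr
  have hrsq : ∀ k, r k ^ 2 = s k := fun k => Real.sq_sqrt (hs0 k)
  -- key estimate
  have key : ∀ k (x : EuclideanSpace ℝ (Fin d)),
      0 < (∑ i, y k i * α k i * Real.exp (-(γ k) * ‖xs k i - x‖ ^ 2)) + b k →
      ∃ i, ‖xs k i - x‖ ≤ r k := by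
    intro k x hx
    by_contra h
    push_neg at h
    have hE : ∀ i : Fin (m k),
        Real.exp (-(γ k) * ‖xs k i - x‖ ^ 2) ≤ Real.exp (-(γ k) * s k) := by
      intro i
      apply Real.exp_le_exp.2
      have h1 : s k ≤ ‖xs k i - x‖ ^ 2 := by
        rw [← hrsq k]
        have := (h i).le
        nlinarith [Real.sqrt_nonneg (s k), norm_nonneg (xs k i - x)]
      nlinarith [(hγ k).le]
    have hterm : ∀ i : Fin (m k),
        y k i * α k i * Real.exp (-(γ k) * ‖xs k i - x‖ ^ 2) ≤
          α k i * Real.exp (-(γ k) * s k) := by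
      intro i
      have hexp0 : (0:ℝ) < Real.exp (-(γ k) * ‖xs k i - x‖ ^ 2) := Real.exp_pos _
      have hy' : y k i * α k i ≤ α k i := by
        rcases hy k i with h' | h' <;> simp [h'] <;> linarith [hα k i]
      calc y k i * α k i * Real.exp (-(γ k) * ‖xs k i - x‖ ^ 2)
          ≤ α k i * Real.exp (-(γ k) * ‖xs k i - x‖ ^ 2) := by
            exact mul_le_mul_of_nonneg_right hy' hexp0.le
        _ ≤ α k i * Real.exp (-(γ k) * s k) :=
            mul_le_mul_of_nonneg_left (hE i) (hα k i)
    have hsum : (∑ i, y k i * α k i * Real.exp (-(γ k) * ‖xs k i - x‖ ^ 2)) ≤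
        A k * Real.exp (-(γ k) * s k) := by
      rw [hA, Finset.sum_mul]
      exact Finset.sum_le_sum fun i _ => hterm i
    -- exp(-γ s) ≤ c * exp(-γ)
    have hsle : -Real.log (c k) / γ k + 1 ≤ s k := le_max_right _ _
    have hEc : Real.exp (-(γ k) * s k) ≤ c k * Real.exp (-(γ k)) := by
      have h1 : -(γ k) * s k ≤ Real.log (c k) + (-(γ k)) := by
        have := mul_le_mul_of_nonneg_left hsle (hγ k).le
        have hγne : γ k ≠ 0 := (hγ k).ne'
        field_simp at this ⊢
        rw [mul_div_cancel_left₀ _ hγne] at this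
        nlinarith [hγ k]
      calc Real.exp (-(γ k) * s k) ≤ Real.exp (Real.log (c k) + (-(γ k))) :=
            Real.exp_le_exp.2 h1
        _ = c k * Real.exp (-(γ k)) := by
            rw [Real.exp_add, Real.exp_log (hc0 k)]
    have hfinal : A k * Real.exp (-(γ k) * s k) < -b k := by
      have h1 : A k * Real.exp (-(γ k) * s k) ≤ A k * (c k * Real.exp (-(γ k))) :=
        mul_le_mul_of_nonneg_left hEc (hA0 k)
      have h2 : A k * (c k * Real.exp (-(γ k))) < c k * (A k + 1) := by
        have he1 : Real.exp (-(γ k)) ≤ 1 := Real.exp_le_one_iff.2 (by linarith [hγ k])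
        have hce : c k * Real.exp (-(γ k)) ≤ c k := by
          nlinarith [hc0 k]
        have h2a : A k * (c k * Real.exp (-(γ k))) ≤ A k * c k :=
          mul_le_mul_of_nonneg_left hce (hA0 k)
        nlinarith [hc0 k]
      have h3 : c k * (A k + 1) = -b k := by
        have hne : A k + 1 ≠ 0 := by have := hA0 k; positivity
        rw [hc]; field_simp
      linarith
    linarith
  have hsub : {x : EuclideanSpace ℝ (Fin d) |
      ∃ k, 0 < (∑ i, y k i * α k i * Real.exp (-(γ k) * ‖xs k i - x‖ ^ 2)) + b k} ⊆
      ⋃ k, ⋃ i, Metric.closedBall (xs k i) (r k) := by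
    rintro x ⟨k, hk⟩
    obtain ⟨i, hi⟩ := key k x hk
    refine Set.mem_iUnion.2 ⟨k, Set.mem_iUnion.2 ⟨i, ?_⟩⟩
    rw [Metric.mem_closedBall, dist_comm, dist_eq_norm]
    exact hi
  exact ((Bornology.isBounded_iUnion.2 fun k =>
    Bornology.isBounded_iUnion.2 fun i => Metric.isBounded_closedBall).subset hsub)
end
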